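/- arXiv:gr-qc/0405080 — 2 statements merged into one kernel-verified Lean document; each statement's English description precedes it below -/
import Mathlib

section
/- Under the hypotheses of the preceding construction—β_i a given smooth vector field on ℝ × ℝ³; A_ij, κ smooth fields satisfying ∂_t∂_t A_ij = ΔA_ij and ∂_t∂_t κ = Δκ; smooth initial fields γ̃⁰_ij, Γ⁰_i, α⁰, φ⁰ on ℝ³ with ∂_t A_ij(0,·) = −(1/2)Δγ̃⁰_ij + (1/2)(∂_i Γ⁰_j + ∂_j Γ⁰_i) − 2∂_i∂_j φ⁰ − 2δ_ij Δφ⁰ − ∂_i∂_j α⁰ + (1/3)δ_ij Δα⁰ and ∂_t κ(0,·) = −Δα⁰; and φ, α, γ̃_ij, Γ_i defined by the time-integral formulas φ = φ⁰ + ∫₀ᵗ[−(1/6)κ + (1/6)∂_l β_l], α = α⁰ − ∫₀ᵗ κ, γ̃_ij = γ̃⁰_ij + ∫₀ᵗ[−2A_ij + ∂_i β_j + ∂_j β_i − (2/3)δ_ij ∂_l β_l], Γ_i = Γ⁰_i + ∫₀ᵗ[−(4/3)∂_i κ + (1/3)∂_i(∂_p β_p) + Δβ_i]—assume moreover that A and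 κ satisfy the momentum constraint ∂_l A_il − (2/3)∂_i κ = 0 at every point of ℝ × ℝ³, and that the initial data satisfy the constraints ∂_l∂_j γ̃⁰_lj − 8Δφ⁰ = 0, ∂_l Γ⁰_l − 8Δφ⁰ = 0, and Γ⁰_i = ∂_l γ̃⁰_il on ℝ³. Then for every (t,x) ∈ ℝ × ℝ³ the constructed fields satisfy the constraints ∂_l∂_j γ̃_lj − 8Δφ = 0, ∂_l Γ_l − 8Δφ = 0, and Γ_i = ∂_l γ̃_il. -/
noncomputable section

/-- Spacetime ℝ × ℝ³. -/
abbrev Spc : Type := ℝ × (Fin 3 → ℝ)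

/-- Time derivative ∂_t. -/
noncomputable def pt (f : Spc → ℝ) : Spc → ℝ :=
  fun p => deriv (fun s => f (s, p.2)) p.1

/-- Spatial partial derivative ∂_i. -/
noncomputable def ps (i : Fin 3) (f : Spc → ℝ) : Spc → ℝ :=
  fun p => deriv (fun s => f (p.1, Function.update p.2 i s)) (p.2 i)

/-- Spatial Laplacian Δ = Σ_i ∂_i ∂_i. -/
noncomputable def lap (f : Spc → ℝ) : Spc → ℝ :=
  fun p => ∑ i : Fin 3, ps i (ps i f) p

/-- Kronecker delta δ_ij. -/
noncomputable def kron (i j : Fin 3) : ℝ := if i = j then 1 else 0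

/-- Spatial partial derivative ∂_i on ℝ³ (for initial-data fields). -/
noncomputable def d (i : Fin 3) (f : (Fin 3 → ℝ) → ℝ) : (Fin 3 → ℝ) → ℝ :=
  fun x => deriv (fun s => f (Function.update x i s)) (x i)

/-- Spatial Laplacian on ℝ³ (for initial-data fields). -/
noncomputable def lapS (f : (Fin 3 → ℝ) → ℝ) : (Fin 3 → ℝ) → ℝ :=
  fun x => ∑ i : Fin 3, d i (d i f) x


open MeasureTheory

/-! ### Auxiliary derivative API -/

lemma smooth_diff {E F : Type*} [NormedAddCommGroup E] [NormedSpace ℝ E]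
    [NormedAddCommGroup F] [NormedSpace ℝ F] {f : E → F}
    (hf : ContDiff ℝ (⊤ : ℕ∞) f) : Differentiable ℝ f :=
  hf.differentiable (by simp)

lemma smooth_fderiv {E F : Type*} [NormedAddCommGroup E] [NormedSpace ℝ E]
    [NormedAddCommGroup F] [NormedSpace ℝ F] {f : E → F}
    (hf : ContDiff ℝ (⊤ : ℕ∞) f) : ContDiff ℝ (⊤ : ℕ∞) (fderiv ℝ f) :=
  hf.fderiv_right (by exact_mod_cast le_top)

lemma hasDerivAt_line (t : ℝ) (x : Fin 3 → ℝ) (i : Fin 3) (r : ℝ) :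
    HasDerivAt (fun s : ℝ => ((t, Function.update x i s) : Spc))
      ((0, Pi.single i 1) : Spc) r := by
  have h : (fun s : ℝ => ((t, Function.update x i s) : Spc))
      = fun s : ℝ => ((t, Function.update x i 0) : Spc) + s • ((0, Pi.single i 1) : Spc) := by
    funext s
    refine Prod.ext (by simp) ?_
    funext j
    by_cases hj : j = i
    · subst hj; simp
    · simp [Function.update_of_ne hj, Pi.single_eq_of_ne hj]
  rw [h]
  simpa using (((hasDerivAt_id r).smul_const ((0, Pi.single i 1) : Spc)).const_add
    ((t, Function.update x i 0) : Spc))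

lemma hasDerivAt_line3 (x : Fin 3 → ℝ) (i : Fin 3) (r : ℝ) :
    HasDerivAt (fun s : ℝ => Function.update x i s) (Pi.single i 1 : Fin 3 → ℝ) r := by
  have h : (fun s : ℝ => Function.update x i s)
      = fun s : ℝ => Function.update x i 0 + s • (Pi.single i 1 : Fin 3 → ℝ) := by
    funext s; funext j
    by_cases hj : j = i
    · subst hj; simp
    · simp [Function.update_of_ne hj, Pi.single_eq_of_ne hj]
  rw [h]
  simpa using (((hasDerivAt_id r).smul_const (Pi.single i 1 : Fin 3 → ℝ)).const_add
    (Function.update x i 0))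

lemma ps_fderiv (i : Fin 3) (f : Spc → ℝ) (hf : Differentiable ℝ f) (p : Spc) :
    ps i f p = fderiv ℝ f p ((0, Pi.single i 1) : Spc) := by
  have h := (hf (p.1, Function.update p.2 i (p.2 i))).hasFDerivAt.comp_hasDerivAt (p.2 i)
    (hasDerivAt_line p.1 p.2 i (p.2 i))
  rw [Function.update_eq_self] at h
  exact h.deriv

lemma d_fderiv (i : Fin 3) (f : (Fin 3 → ℝ) → ℝ) (hf : Differentiable ℝ f) (x : Fin 3 → ℝ) :
    d i f x = fderiv ℝ f x (Pi.single i 1) := by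
  have h := (hf (Function.update x i (x i))).hasFDerivAt.comp_hasDerivAt (x i)
    (hasDerivAt_line3 x i (x i))
  rw [Function.update_eq_self] at h
  exact h.deriv

lemma hasDerivAt_ps (f : Spc → ℝ) (hf : Differentiable ℝ f) (t : ℝ) (x : Fin 3 → ℝ)
    (i : Fin 3) (r : ℝ) :
    HasDerivAt (fun s => f (t, Function.update x i s))
      (ps i f (t, Function.update x i r)) r := by
  have h := (hf (t, Function.update x i r)).hasFDerivAt.comp_hasDerivAt r
    (hasDerivAt_line t x i r)
  rw [ps_fderiv i f hf]
  exact h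

lemma hasDerivAt_d (f : (Fin 3 → ℝ) → ℝ) (hf : Differentiable ℝ f) (x : Fin 3 → ℝ) (i : Fin 3) :
    HasDerivAt (fun r => f (Function.update x i r)) (d i f x) (x i) := by
  have h := (hf (Function.update x i (x i))).hasFDerivAt.comp_hasDerivAt (x i)
    (hasDerivAt_line3 x i (x i))
  rw [Function.update_eq_self] at h
  rw [d_fderiv i f hf]
  exact h

lemma hasDerivAt_slice (i : Fin 3) (f : Spc → ℝ) (hf : Differentiable ℝ f) (p : Spc) :
    HasDerivAt (fun s => f (p.1, Function.update p.2 i s)) (ps i f p) (p.2 i) := by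
  have h := hasDerivAt_ps f hf p.1 p.2 i (p.2 i)
  rwa [Function.update_eq_self] at h

lemma contDiff_ps (i : Fin 3) (f : Spc → ℝ) (hf : ContDiff ℝ (⊤ : ℕ∞) f) :
    ContDiff ℝ (⊤ : ℕ∞) (ps i f) := by
  have h : ps i f = fun p => fderiv ℝ f p ((0, Pi.single i 1) : Spc) :=
    funext (ps_fderiv i f (smooth_diff hf))
  rw [h]
  exact (smooth_fderiv hf).clm_apply contDiff_const

lemma contDiff_d (i : Fin 3) (f : (Fin 3 → ℝ) → ℝ) (hf : ContDiff ℝ (⊤ : ℕ∞) f) :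
    ContDiff ℝ (⊤ : ℕ∞) (d i f) := by
  have h : d i f = fun x => fderiv ℝ f x (Pi.single i 1) :=
    funext (d_fderiv i f (smooth_diff hf))
  rw [h]
  exact (smooth_fderiv hf).clm_apply contDiff_const

lemma ps_congr (i : Fin 3) (f g : Spc → ℝ) (h : ∀ q, f q = g q) (p : Spc) :
    ps i f p = ps i g p := by rw [funext h]

lemma ps_comm (f : Spc → ℝ) (hf : ContDiff ℝ (⊤ : ℕ∞) f) (i j : Fin 3) (q : Spc) :
    ps i (ps j f) q = ps j (ps i f) q := by
  have hd : Differentiable ℝ f := smooth_diff hf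
  have hd2 : Differentiable ℝ (fderiv ℝ f) := smooth_diff (smooth_fderiv hf)
  have main : ∀ v w : Spc,
      fderiv ℝ (fun q => fderiv ℝ f q w) q v = fderiv ℝ (fderiv ℝ f) q v w := by
    intro v w
    have h2 : HasFDerivAt (fun q => fderiv ℝ f q w)
        ((ContinuousLinearMap.apply ℝ ℝ w).comp (fderiv ℝ (fderiv ℝ f) q)) q :=
      (ContinuousLinearMap.apply ℝ ℝ w).hasFDerivAt.comp q (hd2 q).hasFDerivAt
    rw [h2.fderiv]
    rfl
  have hsym := second_derivative_symmetric (f := f) (f' := fderiv ℝ f)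
    (f'' := fderiv ℝ (fderiv ℝ f) q) (fun y => (hd y).hasFDerivAt) (hd2 q).hasFDerivAt
  have e1 : ps i (ps j f) q = fderiv ℝ (fderiv ℝ f) q ((0, Pi.single i 1) : Spc)
      ((0, Pi.single j 1) : Spc) := by
    rw [ps_congr i (ps j f) (fun q => fderiv ℝ f q ((0, Pi.single j 1) : Spc))
      (fun q' => ps_fderiv j f hd q') q]
    rw [ps_fderiv i _ ?_ q]
    · exact main _ _
    · intro q'
      exact ((ContinuousLinearMap.apply ℝ ℝ _).hasFDerivAt.comp q'
        (hd2 q').hasFDerivAt).differentiableAt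
  have e2 : ps j (ps i f) q = fderiv ℝ (fderiv ℝ f) q ((0, Pi.single j 1) : Spc)
      ((0, Pi.single i 1) : Spc) := by
    rw [ps_congr j (ps i f) (fun q => fderiv ℝ f q ((0, Pi.single i 1) : Spc))
      (fun q' => ps_fderiv i f hd q') q]
    rw [ps_fderiv j _ ?_ q]
    · exact main _ _
    · intro q'
      exact ((ContinuousLinearMap.apply ℝ ℝ _).hasFDerivAt.comp q'
        (hd2 q').hasFDerivAt).differentiableAt
  rw [e1, e2, hsym]

lemma swap3 (f : Spc → ℝ) (hf : ContDiff ℝ (⊤ : ℕ∞) f) (a b : Fin 3) (q : Spc) :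
    ps a (ps b (ps b f)) q = ps b (ps b (ps a f)) q := by
  rw [ps_comm (ps b f) (contDiff_ps b f hf) a b q]
  exact ps_congr b _ _ (fun q' => ps_comm f hf a b q') q

/-! ### Pointwise linearity of `ps` -/

lemma ps_sum (i : Fin 3) (f : Fin 3 → Spc → ℝ) (hf : ∀ c, Differentiable ℝ (f c)) (p : Spc) :
    ps i (fun q => ∑ c, f c q) p = ∑ c, ps i (f c) p :=
  (HasDerivAt.fun_sum fun c _ => hasDerivAt_slice i (f c) (hf c) p).deriv

lemma ps_const_mul (i : Fin 3) (f : Spc → ℝ) (hf : Differentiable ℝ f) (c : ℝ) (p : Spc) :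
    ps i (fun q => c * f q) p = c * ps i f p :=
  (HasDerivAt.const_mul c (hasDerivAt_slice i f hf p)).deriv

lemma ps_Gshape (a : Fin 3) (f1 f2 f3 : Spc → ℝ) (f4 : Fin 3 → Spc → ℝ) (c : ℝ)
    (h1 : Differentiable ℝ f1) (h2 : Differentiable ℝ f2) (h3 : Differentiable ℝ f3)
    (h4 : ∀ k, Differentiable ℝ (f4 k)) (q : Spc) :
    ps a (fun q => -2 * f1 q + f2 q + f3 q - c * ∑ k, f4 k q) q
      = -2 * ps a f1 q + ps a f2 q + ps a f3 q - c * ∑ k, ps a (f4 k) q :=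
  ((((HasDerivAt.const_mul (-2:ℝ) (hasDerivAt_slice a f1 h1 q)).add
    (hasDerivAt_slice a f2 h2 q)).add (hasDerivAt_slice a f3 h3 q)).sub
    (HasDerivAt.const_mul c (HasDerivAt.fun_sum fun k _ => hasDerivAt_slice a (f4 k) (h4 k) q))).deriv

lemma ps_Hshape (a : Fin 3) (f1 f2 f3 : Spc → ℝ)
    (h1 : Differentiable ℝ f1) (h2 : Differentiable ℝ f2) (h3 : Differentiable ℝ f3) (q : Spc) :
    ps a (fun q => -(4/3) * f1 q + (1/3) * f2 q + f3 q)
      q = -(4/3) * ps a f1 q + (1/3) * ps a f2 q + ps a f3 q :=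
  ((((HasDerivAt.const_mul (-(4/3):ℝ) (hasDerivAt_slice a f1 h1 q)).add
    (HasDerivAt.const_mul ((1/3):ℝ) (hasDerivAt_slice a f2 h2 q))).add
    (hasDerivAt_slice a f3 h3 q))).deriv

lemma ps_Pshape (a : Fin 3) (f1 : Spc → ℝ) (f2 : Fin 3 → Spc → ℝ)
    (h1 : Differentiable ℝ f1) (h2 : ∀ k, Differentiable ℝ (f2 k)) (q : Spc) :
    ps a (fun q => -(1/6) * f1 q + (1/6) * ∑ k, f2 k q) q
      = -(1/6) * ps a f1 q + (1/6) * ∑ k, ps a (f2 k) q :=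
  ((HasDerivAt.const_mul (-(1/6):ℝ) (hasDerivAt_slice a f1 h1 q)).add
    (HasDerivAt.const_mul ((1/6):ℝ)
      (HasDerivAt.fun_sum fun k _ => hasDerivAt_slice a (f2 k) (h2 k) q))).deriv

lemma kron_sum (i : Fin 3) (c : ℝ) (S : Fin 3 → ℝ) :
    ∑ a, c * kron i a * S a = c * S i := by
  rw [Finset.sum_eq_single i]
  · simp [kron]
  · intro b _ hb
    simp [kron, if_neg (Ne.symm hb)]
  · simp

/-! ### Differentiation under the integral sign -/

lemma cont_slice {f : Spc → ℝ} (hf : Continuous f) (x : Fin 3 → ℝ) :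
    Continuous (fun s : ℝ => f (s, x)) :=
  hf.comp (continuous_id.prodMk continuous_const)

lemma intInt {f : Spc → ℝ} (hf : Continuous f) (x : Fin 3 → ℝ) (t : ℝ) :
    IntervalIntegrable (fun s => f (s, x)) volume 0 t :=
  (cont_slice hf x).intervalIntegrable 0 t

lemma hasDerivAt_slice_integral (g : Spc → ℝ) (hg : ContDiff ℝ (⊤ : ℕ∞) g)
    (t : ℝ) (x : Fin 3 → ℝ) (i : Fin 3) :
    HasDerivAt (fun r => ∫ s in (0:ℝ)..t, g (s, Function.update x i r))
      (∫ s in (0:ℝ)..t, ps i g (s, x)) (x i) := by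
  have hgd : Differentiable ℝ g := smooth_diff hg
  have hpsg : Continuous (ps i g) := (contDiff_ps i g hg).continuous
  have hcont : Continuous (fun q : ℝ × ℝ => ps i g (q.1, Function.update x i q.2)) :=
    hpsg.comp (continuous_fst.prodMk (continuous_const.update i continuous_snd))
  have hK : IsCompact ((Set.uIcc (0:ℝ) t) ×ˢ (Metric.closedBall (x i) 1)) :=
    isCompact_uIcc.prod (isCompact_closedBall _ _)
  obtain ⟨C, hC⟩ := hK.exists_bound_of_continuousOn hcont.continuousOn
  have H := (intervalIntegral.hasDerivAt_integral_of_dominated_loc_of_deriv_le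
    (μ := volume) (a := 0) (b := t) (x₀ := x i) (s := Metric.ball (x i) 1)
    (F := fun r s => g (s, Function.update x i r))
    (F' := fun r s => ps i g (s, Function.update x i r))
    (bound := fun _ => C)
    (Metric.ball_mem_nhds _ one_pos)
    (Filter.Eventually.of_forall fun r =>
      (cont_slice hg.continuous (Function.update x i r)).aestronglyMeasurable)
    ((cont_slice hg.continuous _).intervalIntegrable 0 t)
    (cont_slice hpsg _).aestronglyMeasurable
    (Filter.Eventually.of_forall fun s hs r hr =>
      hC (s, r) ⟨Set.uIoc_subset_uIcc hs, Metric.ball_subset_closedBall hr⟩)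
    intervalIntegrable_const
    (Filter.Eventually.of_forall fun s _ r _ => hasDerivAt_ps g hgd s x i r)).2
  simpa [Function.update_eq_self] using H

lemma ps_shape (i : Fin 3) (g0 : (Fin 3 → ℝ) → ℝ) (hg0 : ContDiff ℝ (⊤ : ℕ∞) g0)
    (g : Spc → ℝ) (hg : ContDiff ℝ (⊤ : ℕ∞) g) (f : Spc → ℝ)
    (hf : ∀ t : ℝ, ∀ x : Fin 3 → ℝ, f (t, x) = g0 x + ∫ s in (0:ℝ)..t, g (s, x))
    (t : ℝ) (x : Fin 3 → ℝ) :
    ps i f (t, x) = d i g0 x + ∫ s in (0:ℝ)..t, ps i g (s, x) := by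
  have h1 := hasDerivAt_d g0 (smooth_diff hg0) x i
  have h2 := hasDerivAt_slice_integral g hg t x i
  have h3 := h1.add h2
  have heq : (fun r => g0 (Function.update x i r)
      + ∫ s in (0:ℝ)..t, g (s, Function.update x i r))
      = fun r => f (t, Function.update x i r) :=
    funext fun r => (hf t (Function.update x i r)).symm
  replace h3 : HasDerivAt (fun r => f (t, Function.update x i r))
      (d i g0 x + ∫ s in (0:ℝ)..t, ps i g (s, x)) (x i) := by
    rw [← heq]; exact h3
  exact h3.deriv

/-- integrand of γ. -/
noncomputable def Gf (A : Fin 3 → Fin 3 → Spc → ℝ) (β : Fin 3 → Spc → ℝ) (i j : Fin 3) :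
    Spc → ℝ :=
  fun q => -2 * A i j q + ps i (β j) q + ps j (β i) q - (2/3) * kron i j * ∑ a, ps a (β a) q

/-- integrand of Γ. -/
noncomputable def Hf (κ : Spc → ℝ) (β : Fin 3 → Spc → ℝ) (i : Fin 3) : Spc → ℝ :=
  fun q => -(4/3) * ps i κ q + (1/3) * ps i (fun q' => ∑ a, ps a (β a) q') q + lap (β i) q

/-- integrand of φ. -/
noncomputable def Pf (κ : Spc → ℝ) (β : Fin 3 → Spc → ℝ) : Spc → ℝ :=
  fun q => -(1/6) * κ q + (1/6) * ∑ i, ps i (β i) q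

section Fields
variable (β : Fin 3 → Spc → ℝ) (A : Fin 3 → Fin 3 → Spc → ℝ) (κ : Spc → ℝ)
variable (hβ : ∀ i, ContDiff ℝ (⊤ : ℕ∞) (β i)) (hA : ∀ i j, ContDiff ℝ (⊤ : ℕ∞) (A i j))
variable (hκ : ContDiff ℝ (⊤ : ℕ∞) κ)

include hβ in
lemma smooth_lapβ (i : Fin 3) : ContDiff ℝ (⊤ : ℕ∞) (lap (β i)) := by
  show ContDiff ℝ (⊤ : ℕ∞) (fun p => ∑ c : Fin 3, ps c (ps c (β i)) p)
  exact ContDiff.sum fun c _ => contDiff_ps c _ (contDiff_ps c _ (hβ i))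

include hβ hA in
lemma smooth_G (i j : Fin 3) : ContDiff ℝ (⊤ : ℕ∞) (Gf A β i j) :=
  (((contDiff_const.mul (hA i j)).add (contDiff_ps i _ (hβ j))).add
    (contDiff_ps j _ (hβ i))).sub
    (contDiff_const.mul (ContDiff.sum fun a _ => contDiff_ps a _ (hβ a)))

include hβ hκ in
lemma smooth_H (i : Fin 3) : ContDiff ℝ (⊤ : ℕ∞) (Hf κ β i) :=
  (((contDiff_const.mul (contDiff_ps i _ hκ)).add
    (contDiff_const.mul (contDiff_ps i _ (ContDiff.sum fun a _ => contDiff_ps a _ (hβ a))))).add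
    (smooth_lapβ β hβ i))

include hβ hκ in
lemma smooth_P : ContDiff ℝ (⊤ : ℕ∞) (Pf κ β) :=
  (contDiff_const.mul hκ).add
    (contDiff_const.mul (ContDiff.sum fun a _ => contDiff_ps a _ (hβ a)))

include hβ hA in
lemma hG_exp (i j a : Fin 3) (q : Spc) :
    ps a (Gf A β i j) q = -2 * ps a (A i j) q + ps a (ps i (β j)) q + ps a (ps j (β i)) q
      - (2/3) * kron i j * ∑ c, ps a (ps c (β c)) q :=
  ps_Gshape a (A i j) (ps i (β j)) (ps j (β i)) (fun c => ps c (β c)) ((2/3) * kron i j)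
    (smooth_diff (hA i j)) (smooth_diff (contDiff_ps i _ (hβ j)))
    (smooth_diff (contDiff_ps j _ (hβ i))) (fun c => smooth_diff (contDiff_ps c _ (hβ c))) q

include hβ hA in
lemma hG2_exp (i j a b : Fin 3) (q : Spc) :
    ps a (ps b (Gf A β i j)) q = -2 * ps a (ps b (A i j)) q + ps a (ps b (ps i (β j))) q
      + ps a (ps b (ps j (β i))) q - (2/3) * kron i j * ∑ c, ps a (ps b (ps c (β c))) q := by
  rw [ps_congr a (ps b (Gf A β i j))
    (fun q' => -2 * ps b (A i j) q' + ps b (ps i (β j)) q' + ps b (ps j (β i)) q'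
      - (2/3) * kron i j * ∑ c, ps b (ps c (β c)) q') (hG_exp β A hβ hA i j b) q]
  exact ps_Gshape a (ps b (A i j)) (ps b (ps i (β j))) (ps b (ps j (β i)))
    (fun c => ps b (ps c (β c))) ((2/3) * kron i j)
    (smooth_diff (contDiff_ps b _ (hA i j)))
    (smooth_diff (contDiff_ps b _ (contDiff_ps i _ (hβ j))))
    (smooth_diff (contDiff_ps b _ (contDiff_ps j _ (hβ i))))
    (fun c => smooth_diff (contDiff_ps b _ (contDiff_ps c _ (hβ c)))) q

include hβ hκ in
lemma hH_exp (i a : Fin 3) (q : Spc) :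
    ps a (Hf κ β i) q = -(4/3) * ps a (ps i κ) q
      + (1/3) * ∑ c, ps a (ps i (ps c (β c))) q + ∑ b, ps a (ps b (ps b (β i))) q := by
  have h0 : ps a (Hf κ β i) q = -(4/3) * ps a (ps i κ) q
      + (1/3) * ps a (ps i (fun q' => ∑ c, ps c (β c) q')) q + ps a (lap (β i)) q :=
    ps_Hshape a (ps i κ) (ps i (fun q' => ∑ c, ps c (β c) q')) (lap (β i))
      (smooth_diff (contDiff_ps i _ hκ))
      (smooth_diff (contDiff_ps i _ (ContDiff.sum fun c _ => contDiff_ps c _ (hβ c))))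
      (smooth_diff (smooth_lapβ β hβ i)) q
  rw [h0]
  have e1 : ps a (ps i (fun q' => ∑ c, ps c (β c) q')) q = ∑ c, ps a (ps i (ps c (β c))) q := by
    rw [ps_congr a (ps i (fun q' => ∑ c, ps c (β c) q')) (fun q' => ∑ c, ps i (ps c (β c)) q')
      (fun q' => ps_sum i (fun c => ps c (β c))
        (fun c => smooth_diff (contDiff_ps c _ (hβ c))) q') q]
    exact ps_sum a (fun c => ps i (ps c (β c)))
      (fun c => smooth_diff (contDiff_ps i _ (contDiff_ps c _ (hβ c)))) q
  have e2 : ps a (lap (β i)) q = ∑ b, ps a (ps b (ps b (β i))) q :=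
    ps_sum a (fun b => ps b (ps b (β i)))
      (fun b => smooth_diff (contDiff_ps b _ (contDiff_ps b _ (hβ i)))) q
  rw [e1, e2]

include hβ hκ in
lemma hP_exp (c : Fin 3) (q : Spc) :
    ps c (Pf κ β) q = -(1/6) * ps c κ q + (1/6) * ∑ k, ps c (ps k (β k)) q :=
  ps_Pshape c κ (fun k => ps k (β k)) (smooth_diff hκ)
    (fun k => smooth_diff (contDiff_ps k _ (hβ k))) q

include hβ hκ in
lemma hP2_exp (a c : Fin 3) (q : Spc) :
    ps a (ps c (Pf κ β)) q
      = -(1/6) * ps a (ps c κ) q + (1/6) * ∑ k, ps a (ps c (ps k (β k))) q := by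
  rw [ps_congr a (ps c (Pf κ β))
    (fun q' => -(1/6) * ps c κ q' + (1/6) * ∑ k, ps c (ps k (β k)) q')
    (hP_exp β κ hβ hκ c) q]
  exact ps_Pshape a (ps c κ) (fun k => ps c (ps k (β k)))
    (smooth_diff (contDiff_ps c _ hκ))
    (fun k => smooth_diff (contDiff_ps c _ (contDiff_ps k _ (hβ k)))) q


end Fields



section Ident
variable (β : Fin 3 → Spc → ℝ) (A : Fin 3 → Fin 3 → Spc → ℝ) (κ : Spc → ℝ)
variable (hβ : ∀ i, ContDiff ℝ (⊤ : ℕ∞) (β i)) (hA : ∀ i j, ContDiff ℝ (⊤ : ℕ∞) (A i j))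
variable (hκ : ContDiff ℝ (⊤ : ℕ∞) κ)
variable (hMom : ∀ i p, (∑ a, ps a (A i a) p) - (2/3) * ps i κ p = 0)

include hβ hA hκ hMom in
lemma identityA (i : Fin 3) (q : Spc) : ∑ a, ps a (Gf A β i a) q = Hf κ β i q := by
  have hM : ∑ a, ps a (A i a) q = (2/3) * ps i κ q := by
    have := hMom i q; linarith
  have step1 : ∑ a, ps a (Gf A β i a) q
      = ∑ a, (-2 * ps a (A i a) q + ps i (ps a (β a)) q + ps a (ps a (β i)) q
        - (2/3) * kron i a * ∑ c, ps a (ps c (β c)) q) :=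
    Finset.sum_congr rfl fun a _ => by
      rw [hG_exp β A hβ hA i a a q, ps_comm (β a) (hβ a) a i q]
  have hRHS : Hf κ β i q = -(4/3) * ps i κ q
      + (1/3) * ∑ c, ps i (ps c (β c)) q + ∑ b, ps b (ps b (β i)) q := by
    show -(4/3) * ps i κ q + (1/3) * ps i (fun q' => ∑ a, ps a (β a) q') q + lap (β i) q = _
    rw [ps_sum i (fun c => ps c (β c)) (fun c => smooth_diff (contDiff_ps c _ (hβ c))) q]
    rfl
  rw [step1, hRHS]
  have hi : i = 0 ∨ i = 1 ∨ i = 2 := by fin_cases i <;> decide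
  simp only [Fin.sum_univ_three] at hM ⊢
  rcases hi with rfl | rfl | rfl <;> norm_num [kron, Fin.ext_iff] at hM ⊢ <;> linarith

include hβ hκ in
omit hA hMom in
lemma identityB (q : Spc) :
    ∑ a, ps a (Hf κ β a) q = 8 * ∑ c, ps c (ps c (Pf κ β)) q := by
  have L : ∑ a, ps a (Hf κ β a) q
      = ∑ a, (-(4/3) * ps a (ps a κ) q + (1/3) * ∑ c, ps a (ps a (ps c (β c))) q
        + ∑ b, ps b (ps b (ps a (β a))) q) :=
    Finset.sum_congr rfl fun a _ => by
      have e : ∑ b, ps a (ps b (ps b (β a))) q = ∑ b, ps b (ps b (ps a (β a))) q :=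
        Finset.sum_congr rfl fun b _ => swap3 (β a) (hβ a) a b q
      rw [hH_exp β κ hβ hκ a a q, e]
  have R : ∑ c, ps c (ps c (Pf κ β)) q
      = ∑ c, (-(1/6) * ps c (ps c κ) q + (1/6) * ∑ k, ps c (ps c (ps k (β k))) q) :=
    Finset.sum_congr rfl fun c _ => hP2_exp β κ hβ hκ c c q
  rw [L, R]
  simp only [Fin.sum_univ_three]
  ring

include hβ hA hκ hMom in
lemma identityC (q : Spc) :
    ∑ a, ∑ b, ps a (ps b (Gf A β a b)) q = 8 * ∑ c, ps c (ps c (Pf κ β)) q := by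
  have hAA : ∀ a, ∑ b, ps a (ps b (A a b)) q = (2/3) * ps a (ps a κ) q := by
    intro a
    rw [← ps_sum a (fun b => ps b (A a b))
      (fun b => smooth_diff (contDiff_ps b _ (hA a b))) q]
    rw [ps_congr a (fun q' => ∑ b, ps b (A a b) q') (fun q' => (2/3) * ps a κ q')
      (fun q' => by have := hMom a q'; linarith) q]
    exact ps_const_mul a (ps a κ) (smooth_diff (contDiff_ps a _ hκ)) (2/3) q
  have s1 : ∀ a b, ps a (ps b (Gf A β a b)) q
      = -2 * ps a (ps b (A a b)) q + ps a (ps a (ps b (β b))) q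
        + ps b (ps b (ps a (β a))) q
        - (2/3) * kron a b * ∑ c, ps a (ps b (ps c (β c))) q := by
    intro a b
    have w1 : ps a (ps b (ps a (β b))) q = ps a (ps a (ps b (β b))) q :=
      ps_congr a _ _ (fun q' => ps_comm (β b) (hβ b) b a q') q
    have w2 : ps a (ps b (ps b (β a))) q = ps b (ps b (ps a (β a))) q :=
      swap3 (β a) (hβ a) a b q
    rw [hG2_exp β A hβ hA a b a b q, w1, w2]
  have L : ∑ a, ∑ b, ps a (ps b (Gf A β a b)) q
      = ∑ a, ∑ b, (-2 * ps a (ps b (A a b)) q + ps a (ps a (ps b (β b))) q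
        + ps b (ps b (ps a (β a))) q
        - (2/3) * kron a b * ∑ c, ps a (ps b (ps c (β c))) q) :=
    Finset.sum_congr rfl fun a _ => Finset.sum_congr rfl fun b _ => s1 a b
  have R : ∑ c, ps c (ps c (Pf κ β)) q
      = ∑ c, (-(1/6) * ps c (ps c κ) q + (1/6) * ∑ k, ps c (ps c (ps k (β k))) q) :=
    Finset.sum_congr rfl fun c _ => hP2_exp β κ hβ hκ c c q
  rw [L, R]
  have h0 := hAA 0
  have h1 := hAA 1
  have h2 := hAA 2
  simp only [Fin.sum_univ_three] at h0 h1 h2 ⊢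
  norm_num [kron, Fin.ext_iff]
  linarith [h0, h1, h2]

end Ident


/-- If moreover `A`, `κ` satisfy the momentum constraint everywhere and the initial
data satisfy the Hamiltonian and definition constraints, then the constructed fields
satisfy all constraints for all times. -/
theorem integrated_solution_preserves_constraints
    (β : Fin 3 → Spc → ℝ) (A : Fin 3 → Fin 3 → Spc → ℝ) (κ : Spc → ℝ)
    (hβ : ∀ i, ContDiff ℝ (⊤ : ℕ∞) (β i)) (hA : ∀ i j, ContDiff ℝ (⊤ : ℕ∞) (A i j))
    (hκ : ContDiff ℝ (⊤ : ℕ∞) κ)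
    (hAsym : ∀ i j, A i j = A j i)
    (waveA : ∀ i j p, pt (pt (A i j)) p = lap (A i j) p)
    (waveκ : ∀ p, pt (pt κ) p = lap κ p)
    (γ0 : Fin 3 → Fin 3 → (Fin 3 → ℝ) → ℝ) (Γ0 : Fin 3 → (Fin 3 → ℝ) → ℝ)
    (α0 φ0 : (Fin 3 → ℝ) → ℝ)
    (hγ0 : ∀ i j, ContDiff ℝ (⊤ : ℕ∞) (γ0 i j)) (hΓ0 : ∀ i, ContDiff ℝ (⊤ : ℕ∞) (Γ0 i))
    (hα0 : ContDiff ℝ (⊤ : ℕ∞) α0) (hφ0 : ContDiff ℝ (⊤ : ℕ∞) φ0)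
    (hγ0sym : ∀ i j, γ0 i j = γ0 j i)
    (hinitA : ∀ i j, ∀ x : Fin 3 → ℝ, pt (A i j) (0, x) =
      -(1/2) * lapS (γ0 i j) x + (1/2) * (d i (Γ0 j) x + d j (Γ0 i) x)
        - 2 * d i (d j φ0) x - 2 * kron i j * lapS φ0 x
        - d i (d j α0) x + (1/3) * kron i j * lapS α0 x)
    (hinitκ : ∀ x : Fin 3 → ℝ, pt κ (0, x) = -(lapS α0 x))
    (φ α : Spc → ℝ) (γ : Fin 3 → Fin 3 → Spc → ℝ) (Γ : Fin 3 → Spc → ℝ)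
    (hφ : ∀ t : ℝ, ∀ x : Fin 3 → ℝ, φ (t, x) = φ0 x +
      ∫ s in (0:ℝ)..t, (-(1/6) * κ (s, x) + (1/6) * ∑ i, ps i (β i) (s, x)))
    (hα : ∀ t : ℝ, ∀ x : Fin 3 → ℝ, α (t, x) = α0 x - ∫ s in (0:ℝ)..t, κ (s, x))
    (hγ : ∀ i j, ∀ t : ℝ, ∀ x : Fin 3 → ℝ, γ i j (t, x) = γ0 i j x +
      ∫ s in (0:ℝ)..t, (-2 * A i j (s, x) + ps i (β j) (s, x) + ps j (β i) (s, x)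
        - (2/3) * kron i j * ∑ a, ps a (β a) (s, x)))
    (hΓ : ∀ i, ∀ t : ℝ, ∀ x : Fin 3 → ℝ, Γ i (t, x) = Γ0 i x +
      ∫ s in (0:ℝ)..t, (-(4/3) * ps i κ (s, x)
        + (1/3) * ps i (fun q => ∑ a, ps a (β a) q) (s, x) + lap (β i) (s, x)))
    (hMom : ∀ i p, (∑ a, ps a (A i a) p) - (2/3) * ps i κ p = 0)
    (hHam0γ : ∀ x : Fin 3 → ℝ, (∑ a, ∑ b, d a (d b (γ0 a b)) x) - 8 * lapS φ0 x = 0)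
    (hHam0Γ : ∀ x : Fin 3 → ℝ, (∑ a, d a (Γ0 a) x) - 8 * lapS φ0 x = 0)
    (hDef0 : ∀ i, ∀ x : Fin 3 → ℝ, Γ0 i x = ∑ a, d a (γ0 i a) x) :
    (∀ p : Spc, (∑ a, ∑ b, ps a (ps b (γ a b)) p) - 8 * lap φ p = 0) ∧
    (∀ p : Spc, (∑ a, ps a (Γ a) p) - 8 * lap φ p = 0) ∧
    (∀ i, ∀ p : Spc, Γ i p = ∑ a, ps a (γ i a) p) := by
  have smG : ∀ i j, ContDiff ℝ (⊤ : ℕ∞) (Gf A β i j) := fun i j => smooth_G β A hβ hA i j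
  have smH : ∀ i, ContDiff ℝ (⊤ : ℕ∞) (Hf κ β i) := fun i => smooth_H β κ hβ hκ i
  have smP : ContDiff ℝ (⊤ : ℕ∞) (Pf κ β) := smooth_P β κ hβ hκ
  have hγ' : ∀ i j, ∀ t : ℝ, ∀ x : Fin 3 → ℝ,
      γ i j (t, x) = γ0 i j x + ∫ s in (0:ℝ)..t, Gf A β i j (s, x) := hγ
  have hΓ' : ∀ i, ∀ t : ℝ, ∀ x : Fin 3 → ℝ,
      Γ i (t, x) = Γ0 i x + ∫ s in (0:ℝ)..t, Hf κ β i (s, x) := hΓ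
  have hφ' : ∀ t : ℝ, ∀ x : Fin 3 → ℝ,
      φ (t, x) = φ0 x + ∫ s in (0:ℝ)..t, Pf κ β (s, x) := hφ
  have Eγ : ∀ i j a, ∀ t : ℝ, ∀ x : Fin 3 → ℝ, ps a (γ i j) (t, x)
      = d a (γ0 i j) x + ∫ s in (0:ℝ)..t, ps a (Gf A β i j) (s, x) :=
    fun i j a t x => ps_shape a (γ0 i j) (hγ0 i j) (Gf A β i j) (smG i j) (γ i j) (hγ' i j) t x
  have Eγ2 : ∀ i j a b, ∀ t : ℝ, ∀ x : Fin 3 → ℝ, ps a (ps b (γ i j)) (t, x)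
      = d a (d b (γ0 i j)) x + ∫ s in (0:ℝ)..t, ps a (ps b (Gf A β i j)) (s, x) :=
    fun i j a b t x => ps_shape a (d b (γ0 i j)) (contDiff_d b _ (hγ0 i j))
      (ps b (Gf A β i j)) (contDiff_ps b _ (smG i j)) (ps b (γ i j)) (Eγ i j b) t x
  have EΓ : ∀ i a, ∀ t : ℝ, ∀ x : Fin 3 → ℝ, ps a (Γ i) (t, x)
      = d a (Γ0 i) x + ∫ s in (0:ℝ)..t, ps a (Hf κ β i) (s, x) :=
    fun i a t x => ps_shape a (Γ0 i) (hΓ0 i) (Hf κ β i) (smH i) (Γ i) (hΓ' i) t x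
  have Eφ : ∀ a, ∀ t : ℝ, ∀ x : Fin 3 → ℝ, ps a φ (t, x)
      = d a φ0 x + ∫ s in (0:ℝ)..t, ps a (Pf κ β) (s, x) :=
    fun a t x => ps_shape a φ0 hφ0 (Pf κ β) smP φ hφ' t x
  have Eφ2 : ∀ a, ∀ t : ℝ, ∀ x : Fin 3 → ℝ, ps a (ps a φ) (t, x)
      = d a (d a φ0) x + ∫ s in (0:ℝ)..t, ps a (ps a (Pf κ β)) (s, x) :=
    fun a t x => ps_shape a (d a φ0) (contDiff_d a _ hφ0) (ps a (Pf κ β))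
      (contDiff_ps a _ smP) (ps a φ) (Eφ a) t x
  have hlapφ : ∀ t : ℝ, ∀ x : Fin 3 → ℝ, lap φ (t, x)
      = lapS φ0 x + ∫ s in (0:ℝ)..t, ∑ c, ps c (ps c (Pf κ β)) (s, x) := by
    intro t x
    calc lap φ (t, x) = ∑ c, ps c (ps c φ) (t, x) := rfl
      _ = ∑ c, (d c (d c φ0) x + ∫ s in (0:ℝ)..t, ps c (ps c (Pf κ β)) (s, x)) :=
        Finset.sum_congr rfl fun c _ => Eφ2 c t x
      _ = (∑ c, d c (d c φ0) x)
          + ∑ c, ∫ s in (0:ℝ)..t, ps c (ps c (Pf κ β)) (s, x) := Finset.sum_add_distrib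
      _ = lapS φ0 x + ∫ s in (0:ℝ)..t, ∑ c, ps c (ps c (Pf κ β)) (s, x) := by
        rw [← intervalIntegral.integral_finset_sum (fun c _ =>
          intInt ((contDiff_ps c _ (contDiff_ps c _ smP)).continuous) x t)]
        rfl
  refine ⟨?_, ?_, ?_⟩
  · -- Hamiltonian constraint for γ̃
    intro p
    obtain ⟨t, x⟩ := p
    have hc2 : ∀ a, Continuous (fun q : Spc => ∑ b, ps a (ps b (Gf A β a b)) q) :=
      fun a => continuous_finset_sum _ fun b _ =>
        (contDiff_ps a _ (contDiff_ps b _ (smG a b))).continuous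
    have e1 : ∑ a, ∑ b, ps a (ps b (γ a b)) (t, x)
        = (∑ a, ∑ b, d a (d b (γ0 a b)) x)
          + ∫ s in (0:ℝ)..t, ∑ a, ∑ b, ps a (ps b (Gf A β a b)) (s, x) := by
      calc ∑ a, ∑ b, ps a (ps b (γ a b)) (t, x)
          = ∑ a, ∑ b, (d a (d b (γ0 a b)) x
            + ∫ s in (0:ℝ)..t, ps a (ps b (Gf A β a b)) (s, x)) :=
          Finset.sum_congr rfl fun a _ => Finset.sum_congr rfl fun b _ => Eγ2 a b a b t x
        _ = ∑ a, ((∑ b, d a (d b (γ0 a b)) x)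
            + ∑ b, ∫ s in (0:ℝ)..t, ps a (ps b (Gf A β a b)) (s, x)) :=
          Finset.sum_congr rfl fun a _ => Finset.sum_add_distrib
        _ = (∑ a, ∑ b, d a (d b (γ0 a b)) x)
            + ∑ a, ∑ b, ∫ s in (0:ℝ)..t, ps a (ps b (Gf A β a b)) (s, x) :=
          Finset.sum_add_distrib
        _ = (∑ a, ∑ b, d a (d b (γ0 a b)) x)
            + ∫ s in (0:ℝ)..t, ∑ a, ∑ b, ps a (ps b (Gf A β a b)) (s, x) := by
          have inner : ∀ a : Fin 3,
              ∑ b, ∫ s in (0:ℝ)..t, ps a (ps b (Gf A β a b)) (s, x)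
              = ∫ s in (0:ℝ)..t, ∑ b, ps a (ps b (Gf A β a b)) (s, x) := fun a =>
            (intervalIntegral.integral_finset_sum (fun b _ =>
              intInt ((contDiff_ps a _ (contDiff_ps b _ (smG a b))).continuous) x t)).symm
          rw [Finset.sum_congr rfl (fun a _ => inner a),
            ← intervalIntegral.integral_finset_sum (fun a _ => intInt (hc2 a) x t)]
    have key : (fun s => ∑ a, ∑ b, ps a (ps b (Gf A β a b)) (s, x))
        = fun s => 8 * ∑ c, ps c (ps c (Pf κ β)) (s, x) :=
      funext fun s => identityC β A κ hβ hA hκ hMom (s, x)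
    rw [e1, hlapφ t x, key, intervalIntegral.integral_const_mul]
    have h0 := hHam0γ x
    linarith
  · -- Hamiltonian constraint for Γ
    intro p
    obtain ⟨t, x⟩ := p
    have e1 : ∑ a, ps a (Γ a) (t, x)
        = (∑ a, d a (Γ0 a) x) + ∫ s in (0:ℝ)..t, ∑ a, ps a (Hf κ β a) (s, x) := by
      calc ∑ a, ps a (Γ a) (t, x)
          = ∑ a, (d a (Γ0 a) x + ∫ s in (0:ℝ)..t, ps a (Hf κ β a) (s, x)) :=
          Finset.sum_congr rfl fun a _ => EΓ a a t x
        _ = (∑ a, d a (Γ0 a) x)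
            + ∑ a, ∫ s in (0:ℝ)..t, ps a (Hf κ β a) (s, x) := Finset.sum_add_distrib
        _ = (∑ a, d a (Γ0 a) x) + ∫ s in (0:ℝ)..t, ∑ a, ps a (Hf κ β a) (s, x) := by
          rw [← intervalIntegral.integral_finset_sum (fun a _ =>
            intInt ((contDiff_ps a _ (smH a)).continuous) x t)]
    have key : (fun s => ∑ a, ps a (Hf κ β a) (s, x))
        = fun s => 8 * ∑ c, ps c (ps c (Pf κ β)) (s, x) :=
      funext fun s => identityB β κ hβ hκ (s, x)
    rw [e1, hlapφ t x, key, intervalIntegral.integral_const_mul]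
    have h0 := hHam0Γ x
    linarith
  · -- definition constraint
    intro i p
    obtain ⟨t, x⟩ := p
    calc Γ i (t, x) = Γ0 i x + ∫ s in (0:ℝ)..t, Hf κ β i (s, x) := hΓ' i t x
      _ = (∑ a, d a (γ0 i a) x)
          + ∫ s in (0:ℝ)..t, ∑ a, ps a (Gf A β i a) (s, x) := by
        rw [hDef0 i x]
        congr 1
        refine intervalIntegral.integral_congr fun s _ => ?_
        exact (identityA β A κ hβ hA hκ hMom i (s, x)).symm
      _ = ∑ a, (d a (γ0 i a) x + ∫ s in (0:ℝ)..t, ps a (Gf A β i a) (s, x)) := by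
        rw [Finset.sum_add_distrib, intervalIntegral.integral_finset_sum (fun a _ =>
          intInt ((contDiff_ps a _ (smG i a)).continuous) x t)]
      _ = ∑ a, ps a (γ i a) (t, x) := Finset.sum_congr rfl fun a _ => (Eγ i a a t x).symm
end
end

section
/- Let φ, κ be smooth scalar fields, Γ_i a smooth vector field, and γ̃_ij, A_ij smooth symmetric matrix fields on ℝ × ℝ³ satisfying the reduced linearized BSSN equations (R1) ∂_t φ = −(1/6)κ, (R3) ∂_t γ̃_ij = −2A_ij, (R4) ∂_t A_ij = −(1/2)Δγ̃_ij + (1/2)(∂_i Γ_j + ∂_j Γ_i) − 8∂_i∂_j φ, and (R5) ∂_t Γ_i = −(4/3)∂_i κ. Define Q_lij := −(1/2)∂_l γ̃_ij + (1/2)[ δ_li(Γ_j − 8∂_j φ) + δ_lj(Γ_i − 8∂_i φ) ]. Then at every point of ℝ × ℝ³, ∂_t [ (1/2)Σ_{ij} A_ij² + (1/2)Σ_{lij} Q_lij² ] = Σ_l ∂_l ( Σ_{ij} Q_lij A_ij ). -/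
noncomputable section

/-! ### Auxiliary machinery -/

/-- The time direction vector. -/
def et : Spc := (1, 0)

/-- The spatial direction vectors. -/
def ee (i : Fin 3) : Spc := (0, Pi.single i 1)

/-- Directional derivative. -/
noncomputable def dv (v : Spc) (f : Spc → ℝ) : Spc → ℝ := fun p => fderiv ℝ f p v

lemma cdiff {f : Spc → ℝ} (hf : ContDiff ℝ (⊤ : ℕ∞) f) : Differentiable ℝ f :=
  hf.differentiable (by simp)

lemma pt_eq {f : Spc → ℝ} (hf : Differentiable ℝ f) : pt f = dv et f := by
  funext p
  have h1 : HasDerivAt (fun s : ℝ => ((s, p.2) : Spc)) et p.1 :=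
    (hasDerivAt_id p.1).prodMk (hasDerivAt_const p.1 p.2)
  exact ((hf p).hasFDerivAt.comp_hasDerivAt p.1 h1).deriv

lemma ps_eq (i : Fin 3) {f : Spc → ℝ} (hf : Differentiable ℝ f) : ps i f = dv (ee i) f := by
  funext p
  have key : (fun s : ℝ => ((p.1, Function.update p.2 i s) : Spc))
      = fun s : ℝ => ((p.1, Function.update p.2 i 0 + s • (Pi.single i 1 : Fin 3 → ℝ)) : Spc) := by
    funext s
    refine Prod.ext rfl ?_
    funext j
    by_cases h : j = i
    · subst h; simp
    · simp [Function.update_of_ne h, Pi.single_eq_of_ne h]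
  have h1 : HasDerivAt (fun s : ℝ => ((p.1, Function.update p.2 i s) : Spc)) (ee i) (p.2 i) := by
    rw [key]
    have h2 : HasDerivAt (fun s : ℝ => Function.update p.2 i 0 + s • (Pi.single i 1 : Fin 3 → ℝ))
        (Pi.single i 1) (p.2 i) := by
      simpa using ((hasDerivAt_id (p.2 i)).smul_const (Pi.single i (1:ℝ))).const_add
        (Function.update p.2 i 0)
    exact (hasDerivAt_const (p.2 i) p.1).prodMk h2
  have h0 : ((p.1, Function.update p.2 i (p.2 i)) : Spc) = p := by simp
  have hfd : HasFDerivAt f (fderiv ℝ f p) ((p.1, Function.update p.2 i (p.2 i)) : Spc) := by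
    rw [h0]; exact (hf p).hasFDerivAt
  exact (hfd.comp_hasDerivAt (p.2 i) h1).deriv

lemma dv_contDiff {f : Spc → ℝ} (hf : ContDiff ℝ (⊤ : ℕ∞) f) (v : Spc) :
    ContDiff ℝ (⊤ : ℕ∞) (dv v f) :=
  (hf.fderiv_right (m := (⊤ : ℕ∞)) (by exact_mod_cast le_top)).clm_apply contDiff_const

lemma dv_comm {f : Spc → ℝ} (hf : ContDiff ℝ (⊤ : ℕ∞) f) (v w : Spc) (p : Spc) :
    dv v (dv w f) p = dv w (dv v f) p := by
  have hdf : ∀ y, HasFDerivAt f (fderiv ℝ f y) y :=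
    fun y => (hf.differentiable (by simp) y).hasFDerivAt
  have hdf2 : HasFDerivAt (fderiv ℝ f) (fderiv ℝ (fderiv ℝ f) p) p :=
    (((hf.fderiv_right (m := (⊤ : ℕ∞)) (by exact_mod_cast le_top)).differentiable
      (by simp)) p).hasFDerivAt
  have key : ∀ u z : Spc, dv u (dv z f) p = fderiv ℝ (fderiv ℝ f) p u z := by
    intro u z
    have h : HasFDerivAt (fun q => (ContinuousLinearMap.apply ℝ ℝ z) (fderiv ℝ f q))
        ((ContinuousLinearMap.apply ℝ ℝ z).comp (fderiv ℝ (fderiv ℝ f) p)) p :=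
      (ContinuousLinearMap.apply ℝ ℝ z).hasFDerivAt.comp p hdf2
    have h2 : dv z f = fun q => (ContinuousLinearMap.apply ℝ ℝ z) (fderiv ℝ f q) := rfl
    rw [dv, h2, h.fderiv]
    rfl
  rw [key, key, second_derivative_symmetric hdf hdf2 w v]

lemma dv_comb (c1 c2 : ℝ) {g1 g2 g3 g4 g5 : Spc → ℝ} (h1 : Differentiable ℝ g1)
    (h2 : Differentiable ℝ g2) (h3 : Differentiable ℝ g3) (h4 : Differentiable ℝ g4)
    (h5 : Differentiable ℝ g5) (v p : Spc) :
    dv v (fun q => -(1/2) * g1 q + (1/2) * (c1 * (g2 q - 8 * g3 q) + c2 * (g4 q - 8 * g5 q))) p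
    = -(1/2) * dv v g1 p + (1/2) * (c1 * (dv v g2 p - 8 * dv v g3 p)
        + c2 * (dv v g4 p - 8 * dv v g5 p)) := by
  have H := (((h1 p).hasFDerivAt.const_mul (-(1/2))).fun_add
    ((((((h2 p).hasFDerivAt.fun_sub ((h3 p).hasFDerivAt.const_mul 8)).const_mul c1)).fun_add
      ((((h4 p).hasFDerivAt.fun_sub ((h5 p).hasFDerivAt.const_mul 8)).const_mul c2))).const_mul (1/2)))
  rw [dv, H.fderiv]
  simp [dv, mul_add]

lemma dv_const_mul (c : ℝ) {f : Spc → ℝ} (hf : Differentiable ℝ f) (v p : Spc) :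
    dv v (fun q => c * f q) p = c * dv v f p := by
  have H := (hf p).hasFDerivAt.const_mul c
  rw [dv, H.fderiv]; simp [dv]

lemma dv_energy (F : Fin 3 → Fin 3 → Spc → ℝ) (G : Fin 3 → Fin 3 → Fin 3 → Spc → ℝ)
    (hF : ∀ i j, Differentiable ℝ (F i j)) (hG : ∀ l i j, Differentiable ℝ (G l i j)) (v p : Spc) :
    dv v (fun q => (1/2) * (∑ i, ∑ j, (F i j q)^2)
        + (1/2) * ∑ l, ∑ i, ∑ j, (G l i j q)^2) p
    = (∑ i, ∑ j, F i j p * dv v (F i j) p)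
      + ∑ l, ∑ i, ∑ j, G l i j p * dv v (G l i j) p := by
  have e : (fun q : Spc => (1/2) * (∑ i, ∑ j, (F i j q)^2)
        + (1/2) * ∑ l, ∑ i, ∑ j, (G l i j q)^2)
      = fun q => (1/2) * (∑ i, ∑ j, F i j q * F i j q)
        + (1/2) * ∑ l, ∑ i, ∑ j, G l i j q * G l i j q := by
    funext q; simp [pow_two]
  rw [e]
  have H := ((HasFDerivAt.fun_sum (fun i (_ : i ∈ Finset.univ) =>
      HasFDerivAt.fun_sum (fun j (_ : j ∈ Finset.univ) =>
        ((hF i j) p).hasFDerivAt.fun_mul ((hF i j) p).hasFDerivAt))).const_mul (1/2)).fun_add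
    ((HasFDerivAt.fun_sum (fun l (_ : l ∈ Finset.univ) =>
      HasFDerivAt.fun_sum (fun i (_ : i ∈ Finset.univ) =>
      HasFDerivAt.fun_sum (fun j (_ : j ∈ Finset.univ) =>
        ((hG l i j) p).hasFDerivAt.fun_mul ((hG l i j) p).hasFDerivAt)))).const_mul (1/2))
  rw [dv, H.fderiv]
  simp only [ContinuousLinearMap.add_apply, ContinuousLinearMap.coe_smul', Pi.smul_apply,
    ContinuousLinearMap.coe_sum', Finset.sum_apply, ContinuousLinearMap.smul_apply,
    smul_eq_mul, dv]
  refine congrArg₂ (· + ·) ?_ ?_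
  · rw [Finset.mul_sum]; refine Finset.sum_congr rfl fun i _ => ?_
    rw [Finset.mul_sum]; refine Finset.sum_congr rfl fun j _ => ?_; ring
  · rw [Finset.mul_sum]; refine Finset.sum_congr rfl fun l _ => ?_
    rw [Finset.mul_sum]; refine Finset.sum_congr rfl fun i _ => ?_
    rw [Finset.mul_sum]; refine Finset.sum_congr rfl fun j _ => ?_; ring

lemma dv_flux (F G : Fin 3 → Fin 3 → Spc → ℝ)
    (hF : ∀ i j, Differentiable ℝ (F i j)) (hG : ∀ i j, Differentiable ℝ (G i j)) (v p : Spc) :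
    dv v (fun q => ∑ i, ∑ j, F i j q * G i j q) p
    = ∑ i, ∑ j, (dv v (F i j) p * G i j p + F i j p * dv v (G i j) p) := by
  have H := HasFDerivAt.fun_sum (fun i (_ : i ∈ Finset.univ) =>
      HasFDerivAt.fun_sum (fun j (_ : j ∈ Finset.univ) =>
        ((hF i j) p).hasFDerivAt.fun_mul ((hG i j) p).hasFDerivAt))
  rw [dv, H.fderiv]
  simp only [ContinuousLinearMap.coe_sum', Finset.sum_apply, ContinuousLinearMap.add_apply,
    ContinuousLinearMap.smul_apply, smul_eq_mul, dv]
  refine Finset.sum_congr rfl fun i _ => Finset.sum_congr rfl fun j _ => ?_; ring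

lemma sum_split (D Y Z : Fin 3 → ℝ) (i j : Fin 3) :
    (∑ l, (-(1/2) * D l + (1/2) * (kron l i * Y l + kron l j * Z l)))
    = -(1/2) * (∑ l, D l) + (1/2) * (Y i + Z j) := by
  fin_cases i <;> fin_cases j <;>
    simp [Fin.sum_univ_three, kron] <;> ring

/-- For the reduced linearized BSSN equations (R1), (R3), (R4), (R5), with
`Q_lij = −(1/2)∂_l γ̃_ij + (1/2)[δ_li(Γ_j − 8∂_j φ) + δ_lj(Γ_i − 8∂_i φ)]`, the
energy density `(1/2)Σ A_ij² + (1/2)Σ Q_lij²` has time derivative equal to the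
spatial divergence of the flux `Σ_ij Q_lij A_ij`. -/
theorem reduced_energy_identity_A_Q
    (φ κ : Spc → ℝ) (Γ : Fin 3 → Spc → ℝ)
    (γ A : Fin 3 → Fin 3 → Spc → ℝ)
    (hφ : ContDiff ℝ (⊤ : ℕ∞) φ) (hκ : ContDiff ℝ (⊤ : ℕ∞) κ)
    (hΓ : ∀ i, ContDiff ℝ (⊤ : ℕ∞) (Γ i))
    (hγ : ∀ i j, ContDiff ℝ (⊤ : ℕ∞) (γ i j)) (hA : ∀ i j, ContDiff ℝ (⊤ : ℕ∞) (A i j))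
    (hγsym : ∀ i j, γ i j = γ j i) (hAsym : ∀ i j, A i j = A j i)
    (R1 : ∀ p, pt φ p = -(1/6) * κ p)
    (R3 : ∀ i j p, pt (γ i j) p = -2 * A i j p)
    (R4 : ∀ i j p, pt (A i j) p =
      -(1/2) * lap (γ i j) p + (1/2) * (ps i (Γ j) p + ps j (Γ i) p)
        - 8 * ps i (ps j φ) p)
    (R5 : ∀ i p, pt (Γ i) p = -(4/3) * ps i κ p)
    (Q : Fin 3 → Fin 3 → Fin 3 → Spc → ℝ)
    (hQ : ∀ l i j, Q l i j = fun q =>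
      -(1/2) * ps l (γ i j) q
        + (1/2) * (kron l i * (Γ j q - 8 * ps j φ q)
          + kron l j * (Γ i q - 8 * ps i φ q))) :
    ∀ p, pt (fun q => (1/2) * (∑ i, ∑ j, (A i j q)^2)
        + (1/2) * ∑ l, ∑ i, ∑ j, (Q l i j q)^2) p =
      ∑ l, ps l (fun q => ∑ i, ∑ j, Q l i j q * A i j q) p := by
  intro p
  have dφ : Differentiable ℝ φ := cdiff hφ
  have dκ : Differentiable ℝ κ := cdiff hκ
  have dΓ : ∀ i, Differentiable ℝ (Γ i) := fun i => cdiff (hΓ i)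
  have dγ : ∀ i j, Differentiable ℝ (γ i j) := fun i j => cdiff (hγ i j)
  have dA : ∀ i j, Differentiable ℝ (A i j) := fun i j => cdiff (hA i j)
  have cdvγ : ∀ l i j, ContDiff ℝ (⊤ : ℕ∞) (dv (ee l) (γ i j)) :=
    fun l i j => dv_contDiff (hγ i j) _
  have cdvφ : ∀ l, ContDiff ℝ (⊤ : ℕ∞) (dv (ee l) φ) := fun l => dv_contDiff hφ _
  -- Q in directional-derivative form
  have hQf : ∀ l i j, Q l i j = fun q =>
      -(1/2) * dv (ee l) (γ i j) q + (1/2) * (kron l i * (Γ j q - 8 * dv (ee j) φ q)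
        + kron l j * (Γ i q - 8 * dv (ee i) φ q)) := by
    intro l i j
    simp only [hQ l i j, ps_eq l (dγ i j), ps_eq j dφ, ps_eq i dφ]
  have cQ : ∀ l i j, ContDiff ℝ (⊤ : ℕ∞) (Q l i j) := by
    intro l i j
    rw [hQf l i j]
    exact (contDiff_const.mul (cdvγ l i j)).add (contDiff_const.mul
      ((contDiff_const.mul ((hΓ j).sub (contDiff_const.mul (cdvφ j)))).add
        (contDiff_const.mul ((hΓ i).sub (contDiff_const.mul (cdvφ i))))))
  have dQ : ∀ l i j, Differentiable ℝ (Q l i j) := fun l i j => cdiff (cQ l i j)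
  -- directional derivatives of Q
  have hdvQ : ∀ (v : Spc) (l i j), dv v (Q l i j) p
      = -(1/2) * dv v (dv (ee l) (γ i j)) p
        + (1/2) * (kron l i * (dv v (Γ j) p - 8 * dv v (dv (ee j) φ) p)
          + kron l j * (dv v (Γ i) p - 8 * dv v (dv (ee i) φ) p)) := by
    intro v l i j
    rw [hQf l i j]
    exact dv_comb (kron l i) (kron l j) (cdiff (cdvγ l i j)) (dΓ j) (cdiff (cdvφ j))
      (dΓ i) (cdiff (cdvφ i)) v p
  -- Fact (a): ∂_t Q_lij = ∂_l A_ij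
  have ha : ∀ l i j, dv et (Q l i j) p = dv (ee l) (A i j) p := by
    intro l i j
    rw [hdvQ et l i j]
    have e1 : dv et (dv (ee l) (γ i j)) p = -2 * dv (ee l) (A i j) p := by
      rw [dv_comm (hγ i j) et (ee l) p]
      have h3 : dv et (γ i j) = fun q => -2 * A i j q := by
        rw [← pt_eq (dγ i j)]; funext q; exact R3 i j q
      rw [h3, dv_const_mul (-2) (dA i j)]
    have e2 : ∀ m, dv et (dv (ee m) φ) p = -(1/6) * dv (ee m) κ p := by
      intro m
      rw [dv_comm hφ et (ee m) p]
      have h3 : dv et φ = fun q => -(1/6) * κ q := by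
        rw [← pt_eq dφ]; funext q; exact R1 q
      rw [h3, dv_const_mul (-(1/6)) dκ]
    have e3 : ∀ m, dv et (Γ m) p = -(4/3) * dv (ee m) κ p := by
      intro m
      rw [← congrFun (pt_eq (dΓ m)) p, R5 m p, ps_eq m dκ]
    rw [e1, e2 j, e2 i, e3 j, e3 i]; ring
  -- Fact (b): ∂_t A_ij = Σ_l ∂_l Q_lij
  have hb : ∀ i j, dv et (A i j) p = ∑ l, dv (ee l) (Q l i j) p := by
    intro i j
    have hA' : dv et (A i j) p = pt (A i j) p := (congrFun (pt_eq (dA i j)) p).symm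
    have hlap : lap (γ i j) p = ∑ l, dv (ee l) (dv (ee l) (γ i j)) p := by
      simp only [lap]
      exact Finset.sum_congr rfl fun l _ => by
        rw [ps_eq l (dγ i j), ps_eq l (cdiff (cdvγ l i j))]
    have hΓc : ∀ m n, ps m (Γ n) p = dv (ee m) (Γ n) p := fun m n => by
      rw [ps_eq m (dΓ n)]
    have hφ2 : ps i (ps j φ) p = dv (ee i) (dv (ee j) φ) p := by
      rw [ps_eq j dφ, ps_eq i (cdiff (cdvφ j))]
    have T : (∑ l, dv (ee l) (Q l i j) p)
        = ∑ l, (-(1/2) * dv (ee l) (dv (ee l) (γ i j)) p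
          + (1/2) * (kron l i * (dv (ee l) (Γ j) p - 8 * dv (ee l) (dv (ee j) φ) p)
            + kron l j * (dv (ee l) (Γ i) p - 8 * dv (ee l) (dv (ee i) φ) p))) :=
      Finset.sum_congr rfl fun l _ => hdvQ (ee l) l i j
    have S := sum_split (fun l => dv (ee l) (dv (ee l) (γ i j)) p)
      (fun l => dv (ee l) (Γ j) p - 8 * dv (ee l) (dv (ee j) φ) p)
      (fun l => dv (ee l) (Γ i) p - 8 * dv (ee l) (dv (ee i) φ) p) i j
    rw [hA', R4 i j p, hlap, hΓc i j, hΓc j i, hφ2, T, S,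
      dv_comm hφ (ee j) (ee i) p]
    ring
  -- differentiability of the energy and the fluxes
  have cE : ContDiff ℝ (⊤ : ℕ∞) (fun q => (1/2) * (∑ i, ∑ j, (A i j q)^2)
      + (1/2) * ∑ l, ∑ i, ∑ j, (Q l i j q)^2) :=
    (contDiff_const.mul (ContDiff.sum fun i _ => ContDiff.sum fun j _ => (hA i j).pow 2)).add
      (contDiff_const.mul (ContDiff.sum fun l _ => ContDiff.sum fun i _ =>
        ContDiff.sum fun j _ => (cQ l i j).pow 2))
  have hflux : ∀ l, ps l (fun q => ∑ i, ∑ j, Q l i j q * A i j q) p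
      = ∑ i, ∑ j, (dv (ee l) (Q l i j) p * A i j p + Q l i j p * dv (ee l) (A i j) p) := by
    intro l
    have hd : Differentiable ℝ (fun q => ∑ i, ∑ j, Q l i j q * A i j q) :=
      cdiff (ContDiff.sum fun i _ => ContDiff.sum fun j _ => (cQ l i j).mul (hA i j))
    rw [ps_eq l hd]
    exact dv_flux (Q l) A (fun i j => dQ l i j) dA (ee l) p
  -- put everything together
  rw [pt_eq (cdiff cE), dv_energy A Q dA dQ et p,
    Finset.sum_congr rfl fun l (_ : l ∈ Finset.univ) => hflux l]
  simp only [ha, hb]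
  simp only [Fin.sum_univ_three]
  ring
end
end
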